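/- Suppose there exist a hyperedge e₀ and a vertex k ∈ e₀ with m(e₀) ≠ 0 in ZMod d and |e₀| ≥ 3. Then the canonical stabilizer generator g_k = X_k ∘ ∏_{e : k ∈ e} (C_{e∖{k}}^{-1})^{m(e)} is not an element of the generalized Pauli group: there exist no scalar c ∈ ℂ and exponent functions b, c' : Fin N → ℕ such that g_k = c • (∏_n X_n^{b(n)}) ∘ (∏_n Z_n^{c'(n)}). Consequently |H(m)⟩ fails to have a full set of local-Pauli stabilizer generators of the canonical form. -/

import Mathlib

open Finset

noncomputable section

/-- The primitive `d`-th root of unity `ω = exp(2πi/d)`. -/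
def omega (d : ℕ) : ℂ := Complex.exp (2 * Real.pi * Complex.I / d)

/-- The `N`-qudit Hilbert space, modeled as functions from points to amplitudes. -/
abbrev QV (d N : ℕ) := (Fin N → Fin d) → ℂ

/-- Diagonal operator with diagonal phase function `φ`. -/
def diagOp (d N : ℕ) (φ : (Fin N → Fin d) → ℂ) : Module.End ℂ (QV d N) where
  toFun ψ := fun i => φ i * ψ i
  map_add' ψ ψ' := by funext i; simp [mul_add]
  map_smul' c ψ := by funext i; simp [smul_eq_mul]; ring

lemma diag_comm (d N : ℕ) (φ φ' : (Fin N → Fin d) → ℂ) :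
    Commute (diagOp d N φ) (diagOp d N φ') := by
  apply LinearMap.ext; intro ψ; funext i
  simp [diagOp, Module.End.mul_apply]; ring

/-- The hyperedge operator `C_e`. -/
def Ce (d N : ℕ) (e : Finset (Fin N)) : Module.End ℂ (QV d N) :=
  diagOp d N fun i => omega d ^ ∏ k ∈ e, (i k : ℕ)

/-- The inverse of the hyperedge operator `C_e`. -/
def CeInv (d N : ℕ) (e : Finset (Fin N)) : Module.End ℂ (QV d N) :=
  diagOp d N fun i => (omega d ^ ∏ k ∈ e, (i k : ℕ))⁻¹

/-- The qudit hypergraph state `|H(m)⟩` for a multiplicity function `m`. -/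
def Hstate (d N : ℕ) (m : Finset (Fin N) → ZMod d) : QV d N :=
  fun i => (d : ℂ) ^ (-(N : ℂ)/2) *
    omega d ^ (∑ e : Finset (Fin N), m e * ∏ k ∈ e, ((i k : ℕ) : ZMod d)).val

/-- The generalized Pauli `X` operator on vertex `k`. -/
def Xop (d N : ℕ) [NeZero d] (k : Fin N) : Module.End ℂ (QV d N) where
  toFun ψ := fun i => ψ (Function.update i k (i k + 1))
  map_add' ψ ψ' := by funext i; simp
  map_smul' c ψ := by funext i; simp

/-- The generalized Pauli `Z` operator on vertex `k`. -/
def Zop (d N : ℕ) (k : Fin N) : Module.End ℂ (QV d N) :=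
  diagOp d N fun i => omega d ^ (i k : ℕ)

lemma xop_comm (d N : ℕ) [NeZero d] (k k' : Fin N) :
    Commute (Xop d N k) (Xop d N k') := by
  rcases eq_or_ne k k' with rfl | h
  · exact Commute.refl _
  · apply LinearMap.ext; intro ψ; funext i
    simp only [Xop, Module.End.mul_apply, LinearMap.coe_mk, AddHom.coe_mk]
    rw [Function.update_of_ne h.symm, Function.update_of_ne h, Function.update_comm h]

/-- The canonical stabilizer generator
`g_k = X_k ∘ ∏_{e : k ∈ e} (C_{e∖{k}}⁻¹)^{m(e)}` (exponents are the canonical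
integer lifts of values in `ZMod d`). -/
def gk (d N : ℕ) [NeZero d] (m : Finset (Fin N) → ZMod d) (k : Fin N) :
    Module.End ℂ (QV d N) :=
  Xop d N k *
    Finset.noncommProd (Finset.univ.filter fun e : Finset (Fin N) => k ∈ e)
      (fun e => CeInv d N (e.erase k) ^ (m e).val)
      (fun _ _ _ _ _ => (diag_comm d N _ _).pow_pow _ _)

/-! ### Auxiliary machinery -/

namespace GkAux

variable (d N : ℕ)

lemma diagOp_apply (φ : (Fin N → Fin d) → ℂ) (ψ : QV d N) (i : Fin N → Fin d) :
    diagOp d N φ ψ i = φ i * ψ i := rfl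

lemma diagOp_one : diagOp d N (fun _ => 1) = 1 := by
  apply LinearMap.ext; intro ψ; funext i; simp [diagOp]

lemma diagOp_mul (φ φ' : (Fin N → Fin d) → ℂ) :
    diagOp d N φ * diagOp d N φ' = diagOp d N (fun i => φ i * φ' i) := by
  apply LinearMap.ext; intro ψ; funext i
  simp [diagOp, Module.End.mul_apply]; ring

lemma diagOp_pow (φ : (Fin N → Fin d) → ℂ) (n : ℕ) :
    diagOp d N φ ^ n = diagOp d N (fun i => φ i ^ n) := by
  induction n with
  | zero => simpa using (diagOp_one d N).symm ▸ (by simp [diagOp_one d N] : diagOp d N φ ^ 0 = 1)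
  | succ n ih => rw [pow_succ, ih, diagOp_mul]; simp [pow_succ]

lemma diag_noncommProd {ι : Type*} (s : Finset ι) (φ : ι → (Fin N → Fin d) → ℂ) (comm) :
    s.noncommProd (fun e => diagOp d N (φ e)) comm
      = diagOp d N (fun i => ∏ e ∈ s, φ e i) := by
  revert comm
  induction s using Finset.cons_induction with
  | empty => intro comm; simp [Finset.noncommProd_empty, diagOp_one]
  | cons a s ha ih =>
    intro comm
    rw [Finset.noncommProd_cons, ih, diagOp_mul]
    simp [Finset.prod_cons]

variable [NeZero d]

/-- Shift operator: `(shiftOp v ψ) i = ψ (i + v)`. -/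
def shiftOp (v : Fin N → Fin d) : Module.End ℂ (QV d N) where
  toFun ψ := fun i => ψ (i + v)
  map_add' ψ ψ' := rfl
  map_smul' c ψ := rfl

lemma shiftOp_apply (v : Fin N → Fin d) (ψ : QV d N) (i : Fin N → Fin d) :
    shiftOp d N v ψ i = ψ (i + v) := rfl

lemma shiftOp_zero : shiftOp d N 0 = 1 := by
  apply LinearMap.ext; intro ψ; funext i; simp [shiftOp]

lemma shiftOp_mul (v w : Fin N → Fin d) :
    shiftOp d N v * shiftOp d N w = shiftOp d N (v + w) := by
  apply LinearMap.ext; intro ψ; funext i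
  simp [shiftOp, Module.End.mul_apply, add_assoc]

lemma shiftOp_pow (v : Fin N → Fin d) (n : ℕ) :
    shiftOp d N v ^ n = shiftOp d N (n • v) := by
  induction n with
  | zero => simp [shiftOp_zero]
  | succ n ih => rw [pow_succ, ih, shiftOp_mul, ← succ_nsmul]

lemma shift_noncommProd {ι : Type*} (s : Finset ι) (v : ι → (Fin N → Fin d)) (comm) :
    s.noncommProd (fun e => shiftOp d N (v e)) comm = shiftOp d N (∑ e ∈ s, v e) := by
  revert comm
  induction s using Finset.cons_induction with
  | empty => intro comm; simp [Finset.noncommProd_empty, shiftOp_zero]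
  | cons a s ha ih =>
    intro comm
    rw [Finset.noncommProd_cons, ih, shiftOp_mul, Finset.sum_cons]

lemma Xop_eq (k : Fin N) : Xop d N k = shiftOp d N (Pi.single k 1) := by
  apply LinearMap.ext; intro ψ; funext i
  simp only [Xop, shiftOp, LinearMap.coe_mk, AddHom.coe_mk]
  congr 1
  funext l
  rcases eq_or_ne l k with rfl | h
  · simp [Function.update_self, Pi.single_eq_same]
  · simp [Function.update_of_ne h, Pi.single_eq_of_ne h]

/-! ### Combinatorial lemmas (inclusion–exclusion) -/

lemma alt_sum_subset {ι : Type*} [DecidableEq ι] (A B : Finset ι) :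
    ∑ S ∈ A.powerset.filter (fun S => B ⊆ S), (-1 : ℤ) ^ S.card
      = if B = A then (-1) ^ A.card else 0 := by
  by_cases hBA : B ⊆ A
  · have key : ∑ S ∈ A.powerset.filter (fun S => B ⊆ S), (-1 : ℤ) ^ S.card
        = ∑ S' ∈ (A \ B).powerset, (-1 : ℤ) ^ (S'.card + B.card) := by
      refine Finset.sum_bij' (fun S _ => S \ B) (fun S' _ => S' ∪ B) ?_ ?_ ?_ ?_ ?_
      · intro S hS
        simp only [Finset.mem_filter, Finset.mem_powerset] at hS
        exact Finset.mem_powerset.mpr (Finset.sdiff_subset_sdiff hS.1 le_rfl)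
      · intro S' hS'
        simp only [Finset.mem_powerset] at hS'
        refine Finset.mem_filter.mpr ⟨Finset.mem_powerset.mpr ?_, Finset.subset_union_right⟩
        exact Finset.union_subset (hS'.trans (Finset.sdiff_subset)) hBA
      · intro S hS
        simp only [Finset.mem_filter, Finset.mem_powerset] at hS
        exact Finset.sdiff_union_of_subset hS.2
      · intro S' hS'
        simp only [Finset.mem_powerset] at hS'
        have hdisj : Disjoint S' B := Finset.disjoint_of_subset_left hS' Finset.sdiff_disjoint
        exact Finset.union_sdiff_cancel_right hdisj
      · intro S hS
        simp only [Finset.mem_filter, Finset.mem_powerset] at hS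
        rw [Finset.card_sdiff_add_card_eq_card hS.2]
    rw [key]
    simp only [pow_add, ← Finset.sum_mul]
    rw [Finset.sum_powerset_neg_one_pow_card]
    by_cases hEq : B = A
    · subst hEq
      simp
    · have : A \ B ≠ ∅ := by
        intro h
        exact hEq (Finset.Subset.antisymm hBA (by
          intro a ha
          by_contra hna
          exact (Finset.eq_empty_iff_forall_notMem.mp h a)
            (Finset.mem_sdiff.mpr ⟨ha, hna⟩)))
      simp [this, hEq]
  · have : A.powerset.filter (fun S => B ⊆ S) = ∅ := by
      refine Finset.eq_empty_iff_forall_notMem.mpr fun S hS => ?_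
      simp only [Finset.mem_filter, Finset.mem_powerset] at hS
      exact hBA (hS.2.trans hS.1)
    have hne : B ≠ A := fun h => hBA (h ▸ le_rfl)
    simp [this, hne]

lemma alt_sum_ite {ι : Type*} [DecidableEq ι] {R : Type*} [CommRing R]
    (A : Finset ι) (hA : 2 ≤ A.card) (n : ι) (x y : R) :
    ∑ S ∈ A.powerset, ((-1 : ℤ) ^ S.card : ℤ) • (if n ∈ S then x else y) = 0 := by
  have hAne : A.Nonempty := Finset.card_pos.mp (by omega)
  have h1 : ∑ S ∈ A.powerset, ((-1 : ℤ) ^ S.card : ℤ) • y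
      = ((∑ S ∈ A.powerset, (-1 : ℤ) ^ S.card) : ℤ) • y := by
    rw [Finset.sum_smul]
  have h2 : (∑ S ∈ A.powerset, (-1 : ℤ) ^ S.card) = 0 :=
    Finset.sum_powerset_neg_one_pow_card_of_nonempty hAne
  have hsplit : ∀ S : Finset ι,
      (if n ∈ S then x else y) = y + (if n ∈ S then x - y else 0) := by
    intro S; split <;> ring
  calc ∑ S ∈ A.powerset, ((-1 : ℤ) ^ S.card) • (if n ∈ S then x else y)
      = ∑ S ∈ A.powerset, (((-1 : ℤ) ^ S.card) • y
          + ((-1 : ℤ) ^ S.card) • (if n ∈ S then x - y else 0)) := by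
        refine Finset.sum_congr rfl fun S _ => ?_
        rw [hsplit S, smul_add]
    _ = 0 := by
        rw [Finset.sum_add_distrib, h1, h2, zero_smul, zero_add]
        have : ∑ S ∈ A.powerset, ((-1 : ℤ) ^ S.card) • (if n ∈ S then x - y else 0)
            = ∑ S ∈ A.powerset, (if n ∈ S then ((-1 : ℤ) ^ S.card) • (x - y) else 0) := by
          refine Finset.sum_congr rfl fun S _ => ?_
          split <;> simp
        rw [this, ← Finset.sum_filter]
        have hfilter : A.powerset.filter (fun S => n ∈ S)
            = A.powerset.filter (fun S => {n} ⊆ S) := by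
          apply Finset.filter_congr
          intro S _
          simp [Finset.singleton_subset_iff]
        rw [hfilter, ← Finset.sum_smul]
        have : (∑ S ∈ A.powerset.filter (fun S => {n} ⊆ S), (-1 : ℤ) ^ S.card) = 0 := by
          rw [alt_sum_subset]
          have : ({n} : Finset ι) ≠ A := by
            intro h
            rw [← h] at hA
            simp at hA
          simp [this]
        rw [this, zero_smul]

lemma omega_pow_nat_inj {d : ℕ} [NeZero d] {a b : ℕ}
    (h : omega d ^ a = omega d ^ b) : ((a : ZMod d) = (b : ZMod d)) := by
  have hd0 : d ≠ 0 := NeZero.ne d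
  have hdpos : 0 < d := Nat.pos_of_ne_zero hd0
  have hω : IsPrimitiveRoot (omega d) d := Complex.isPrimitiveRoot_exp d hd0
  have hmod : ∀ n : ℕ, omega d ^ n = omega d ^ (n % d) := by
    intro n
    conv_lhs => rw [← Nat.div_add_mod n d]
    rw [pow_add, pow_mul, hω.pow_eq_one, one_pow, one_mul]
  have : a % d = b % d := by
    refine hω.pow_inj (Nat.mod_lt _ hdpos) (Nat.mod_lt _ hdpos) ?_
    rw [← hmod, ← hmod, h]
  rw [ZMod.natCast_eq_natCast_iff']
  exact this

end GkAux

open GkAux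

/-- If some hyperedge `e₀` of nonzero multiplicity with `|e₀| ≥ 3`
contains the vertex `k`, then the canonical stabilizer generator `g_k` is not an
element of the generalized Pauli group: it is not of the form
`c • (∏ₙ Xₙ^{b n}) ∘ (∏ₙ Zₙ^{c' n})` for any scalar `c` and exponents `b, c'`. -/
theorem gk_not_Pauli (d N : ℕ) [NeZero d] (hd : 2 ≤ d) (hN : 1 ≤ N)
    (m : Finset (Fin N) → ZMod d) (e₀ : Finset (Fin N)) (k : Fin N)
    (hk : k ∈ e₀) (hm : m e₀ ≠ 0) (hcard : 3 ≤ e₀.card) :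
    ¬ ∃ (c : ℂ) (b c' : Fin N → ℕ),
        gk d N m k =
          c • ((Finset.noncommProd Finset.univ (fun n : Fin N => Xop d N n ^ b n)
                  (fun _ _ _ _ _ => (xop_comm d N _ _).pow_pow _ _)) *
               (Finset.noncommProd Finset.univ (fun n : Fin N => Zop d N n ^ c' n)
                  (fun _ _ _ _ _ => (diag_comm d N _ _).pow_pow _ _))) := by
  rintro ⟨c, b, c', heq⟩
  have hd0 : d ≠ 0 := NeZero.ne d
  have hω : IsPrimitiveRoot (omega d) d := Complex.isPrimitiveRoot_exp d hd0
  have hωne : omega d ≠ 0 := hω.ne_zero hd0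
  set ω := omega d with hωdef
  -- the shift vector of the X part
  set v : Fin N → Fin d := ∑ n : Fin N, (b n) • Pi.single n (1 : Fin d) with hvdef
  -- rewrite the X part as a shift operator
  have hXP : (Finset.noncommProd Finset.univ (fun n : Fin N => Xop d N n ^ b n)
      (fun _ _ _ _ _ => (xop_comm d N _ _).pow_pow _ _)) = shiftOp d N v := by
    have h1 : ∀ n : Fin N, Xop d N n ^ b n = shiftOp d N ((b n) • Pi.single n (1 : Fin d)) := by
      intro n; rw [Xop_eq, shiftOp_pow]
    exact (Finset.noncommProd_congr rfl (fun n _ => h1 n) _).trans (shift_noncommProd d N _ _ _)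
  -- rewrite the Z part as a diagonal operator
  have hZP : (Finset.noncommProd Finset.univ (fun n : Fin N => Zop d N n ^ c' n)
      (fun _ _ _ _ _ => (diag_comm d N _ _).pow_pow _ _))
      = diagOp d N (fun i => ∏ n : Fin N, (ω ^ (i n : ℕ)) ^ c' n) := by
    have h1 : ∀ n : Fin N, Zop d N n ^ c' n
        = diagOp d N (fun i => (ω ^ (i n : ℕ)) ^ c' n) := by
      intro n; rw [Zop, diagOp_pow]
    exact (Finset.noncommProd_congr rfl (fun n _ => h1 n) _).trans (diag_noncommProd d N _ _ _)
  -- rewrite gk as X_k times a diagonal operator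
  have hgk : gk d N m k = Xop d N k * diagOp d N (fun i =>
      ∏ e ∈ Finset.univ.filter (fun e : Finset (Fin N) => k ∈ e),
        ((ω ^ ∏ l ∈ e.erase k, (i l : ℕ))⁻¹) ^ (m e).val) := by
    unfold gk
    congr 1
    have h1 : ∀ e ∈ Finset.univ.filter (fun e : Finset (Fin N) => k ∈ e),
        CeInv d N (e.erase k) ^ (m e).val
          = diagOp d N (fun i => ((ω ^ ∏ l ∈ e.erase k, (i l : ℕ))⁻¹) ^ (m e).val) := by
      intro e _; rw [CeInv, diagOp_pow]
    exact (Finset.noncommProd_congr rfl h1 _).trans (diag_noncommProd d N _ _ _)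
  -- the key pointwise identity, obtained by applying both sides to the constant
  -- function 1 and evaluating at j
  have main : ∀ j : Fin N → Fin d,
      (∏ e ∈ Finset.univ.filter (fun e : Finset (Fin N) => k ∈ e),
        ((ω ^ ∏ l ∈ e.erase k, ((Function.update j k (j k + 1)) l : ℕ))⁻¹) ^ (m e).val)
      = c * ∏ n : Fin N, (ω ^ (((j + v) n : Fin d) : ℕ)) ^ c' n := by
    intro j
    have h := congrFun (congrArg (fun T : Module.End ℂ (QV d N) =>
      T (fun _ => (1 : ℂ))) heq) j
    rw [hgk, hXP, hZP] at h
    simp only [Module.End.mul_apply, LinearMap.smul_apply, Pi.smul_apply, smul_eq_mul] at h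
    rw [show ∀ ψ : QV d N, Xop d N k ψ j = ψ (Function.update j k (j k + 1)) from fun _ => rfl]
      at h
    rw [diagOp_apply, shiftOp_apply, diagOp_apply] at h
    simpa using h
  -- the indicator points
  classical
  set χ : Finset (Fin N) → (Fin N → Fin d) := fun S n => if n ∈ S then 1 else 0 with hχdef
  have hval1 : ((1 : Fin d) : ℕ) = 1 := by
    rw [Fin.val_one']
    exact Nat.mod_eq_of_lt (by omega)
  -- natural number exponents
  set T : Finset (Fin N) → ℕ := fun S =>
    ∑ e ∈ Finset.univ.filter (fun e : Finset (Fin N) => k ∈ e),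
      (if e.erase k ⊆ S then (m e).val else 0) with hTdef
  set L : Finset (Fin N) → ℕ := fun S =>
    ∑ n : Fin N, ((χ S n + v n : Fin d) : ℕ) * c' n with hLdef
  -- Claim: the LHS of `main` at χ S equals (ω ^ T S)⁻¹
  have claimA : ∀ S : Finset (Fin N),
      (∏ e ∈ Finset.univ.filter (fun e : Finset (Fin N) => k ∈ e),
        ((ω ^ ∏ l ∈ e.erase k, ((Function.update (χ S) k (χ S k + 1)) l : ℕ))⁻¹) ^ (m e).val)
      = (ω ^ T S)⁻¹ := by
    intro S
    have hP : ∀ e : Finset (Fin N),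
        (∏ l ∈ e.erase k, ((Function.update (χ S) k (χ S k + 1)) l : ℕ))
          = if e.erase k ⊆ S then 1 else 0 := by
      intro e
      by_cases hsub : e.erase k ⊆ S
      · rw [if_pos hsub]
        apply Finset.prod_eq_one
        intro l hl
        have hlk : l ≠ k := Finset.ne_of_mem_erase hl
        rw [Function.update_of_ne hlk]
        simp only [hχdef, if_pos (hsub hl)]
        exact hval1
      · rw [if_neg hsub]
        obtain ⟨l, hl, hlS⟩ := Finset.not_subset.mp hsub
        apply Finset.prod_eq_zero hl
        have hlk : l ≠ k := Finset.ne_of_mem_erase hl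
        rw [Function.update_of_ne hlk]
        simp only [hχdef, if_neg hlS]
        simp
    calc (∏ e ∈ Finset.univ.filter (fun e : Finset (Fin N) => k ∈ e),
          ((ω ^ ∏ l ∈ e.erase k, ((Function.update (χ S) k (χ S k + 1)) l : ℕ))⁻¹) ^ (m e).val)
        = ∏ e ∈ Finset.univ.filter (fun e : Finset (Fin N) => k ∈ e),
            (ω ^ (if e.erase k ⊆ S then (m e).val else 0))⁻¹ := by
          refine Finset.prod_congr rfl fun e _ => ?_
          rw [hP e, ← inv_pow, ← pow_mul]
          congr 2
          split <;> simp
      _ = (ω ^ T S)⁻¹ := by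
          simp only [hTdef]
          rw [Finset.prod_inv_distrib, Finset.prod_pow_eq_pow_sum]
  -- Claim: the RHS product at χ S equals ω ^ L S
  have claimB : ∀ S : Finset (Fin N),
      (∏ n : Fin N, (ω ^ (((χ S + v) n : Fin d) : ℕ)) ^ c' n) = ω ^ L S := by
    intro S
    rw [hLdef]
    rw [← Finset.prod_pow_eq_pow_sum]
    refine Finset.prod_congr rfl fun n _ => ?_
    rw [← pow_mul]
    rfl
  -- the scalar equation
  have hc1 : ∀ S : Finset (Fin N), c * ω ^ (L S + T S) = 1 := by
    intro S
    have h := main (χ S)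
    rw [claimA S, claimB S] at h
    calc c * ω ^ (L S + T S) = (c * ω ^ L S) * ω ^ T S := by rw [pow_add]; ring
      _ = (ω ^ T S)⁻¹ * ω ^ T S := by rw [← h]
      _ = 1 := inv_mul_cancel₀ (pow_ne_zero _ hωne)
  have hcne : c ≠ 0 := left_ne_zero_of_mul_eq_one (hc1 ∅)
  have hpow : ∀ S : Finset (Fin N), ω ^ (L S + T S) = ω ^ (L ∅ + T ∅) := by
    intro S
    exact mul_left_cancel₀ hcne ((hc1 S).trans (hc1 ∅).symm)
  have hmod : ∀ S : Finset (Fin N),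
      ((L S + T S : ℕ) : ZMod d) = ((L ∅ + T ∅ : ℕ) : ZMod d) := fun S =>
    omega_pow_nat_inj (hpow S)
  -- Now the combinatorial contradiction.
  set A : Finset (Fin N) := e₀.erase k with hAdef
  have hA2 : 2 ≤ A.card := by
    rw [hAdef, Finset.card_erase_of_mem hk]; omega
  have hAne : A.Nonempty := Finset.card_pos.mp (by omega)
  -- alternating sum of the constant function is zero
  have hconst : ∑ S ∈ A.powerset, ((-1 : ℤ) ^ S.card) • ((L S + T S : ℕ) : ZMod d) = 0 := by
    have h1 : ∀ S ∈ A.powerset, ((-1 : ℤ) ^ S.card) • ((L S + T S : ℕ) : ZMod d)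
        = ((-1 : ℤ) ^ S.card) • ((L ∅ + T ∅ : ℕ) : ZMod d) := fun S _ => by rw [hmod S]
    rw [Finset.sum_congr rfl h1, ← Finset.sum_smul,
      Finset.sum_powerset_neg_one_pow_card_of_nonempty hAne, zero_smul]
  -- the L-part vanishes
  have hLpart : ∑ S ∈ A.powerset, ((-1 : ℤ) ^ S.card) • ((L S : ℕ) : ZMod d) = 0 := by
    have h1 : ∀ S : Finset (Fin N), ((L S : ℕ) : ZMod d)
        = ∑ n : Fin N, (if n ∈ S then ((((1 : Fin d) + v n : Fin d) : ℕ) * c' n : ℕ)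
            else ((((0 : Fin d) + v n : Fin d) : ℕ) * c' n : ℕ) : ZMod d) := by
      intro S
      rw [hLdef]
      push_cast
      refine Finset.sum_congr rfl fun n _ => ?_
      simp only [hχdef]
      split <;> push_cast <;> ring
    calc ∑ S ∈ A.powerset, ((-1 : ℤ) ^ S.card) • ((L S : ℕ) : ZMod d)
        = ∑ S ∈ A.powerset, ∑ n : Fin N, ((-1 : ℤ) ^ S.card) •
            ((if n ∈ S then ((((1 : Fin d) + v n : Fin d) : ℕ) * c' n : ℕ)
              else ((((0 : Fin d) + v n : Fin d) : ℕ) * c' n : ℕ) : ZMod d)) := by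
          refine Finset.sum_congr rfl fun S _ => ?_
          rw [h1 S, Finset.smul_sum]
      _ = ∑ n : Fin N, ∑ S ∈ A.powerset, ((-1 : ℤ) ^ S.card) •
            ((if n ∈ S then ((((1 : Fin d) + v n : Fin d) : ℕ) * c' n : ℕ)
              else ((((0 : Fin d) + v n : Fin d) : ℕ) * c' n : ℕ) : ZMod d)) :=
          Finset.sum_comm
      _ = 0 := by
          refine Finset.sum_eq_zero fun n _ => ?_
          have := alt_sum_ite (R := ZMod d) A hA2 n
            (((((1 : Fin d) + v n : Fin d) : ℕ) * c' n : ℕ) : ZMod d)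
            (((((0 : Fin d) + v n : Fin d) : ℕ) * c' n : ℕ) : ZMod d)
          simpa only [Nat.cast_ite] using this
  -- the T-part equals ± m e₀
  have hTpart : ∑ S ∈ A.powerset, ((-1 : ℤ) ^ S.card) • ((T S : ℕ) : ZMod d)
      = (((-1 : ℤ) ^ A.card : ℤ) : ZMod d) * m e₀ := by
    have h1 : ∀ S : Finset (Fin N), ((T S : ℕ) : ZMod d)
        = ∑ e ∈ Finset.univ.filter (fun e : Finset (Fin N) => k ∈ e),
            (if e.erase k ⊆ S then m e else 0) := by
      intro S
      rw [hTdef]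
      push_cast
      refine Finset.sum_congr rfl fun e _ => ?_
      split
      · simp [ZMod.natCast_val, ZMod.cast_id]
      · simp
    calc ∑ S ∈ A.powerset, ((-1 : ℤ) ^ S.card) • ((T S : ℕ) : ZMod d)
        = ∑ S ∈ A.powerset, ∑ e ∈ Finset.univ.filter (fun e : Finset (Fin N) => k ∈ e),
            ((-1 : ℤ) ^ S.card) • (if e.erase k ⊆ S then m e else 0) := by
          refine Finset.sum_congr rfl fun S _ => ?_
          rw [h1 S, Finset.smul_sum]
      _ = ∑ e ∈ Finset.univ.filter (fun e : Finset (Fin N) => k ∈ e),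
            ∑ S ∈ A.powerset, ((-1 : ℤ) ^ S.card) • (if e.erase k ⊆ S then m e else 0) :=
          Finset.sum_comm
      _ = ∑ e ∈ Finset.univ.filter (fun e : Finset (Fin N) => k ∈ e),
            ((if e.erase k = A then ((-1 : ℤ) ^ A.card) else 0 : ℤ) : ZMod d) * m e := by
          refine Finset.sum_congr rfl fun e _ => ?_
          have : ∀ S : Finset (Fin N), ((-1 : ℤ) ^ S.card) • (if e.erase k ⊆ S then m e else 0)
              = (if e.erase k ⊆ S then (((-1 : ℤ) ^ S.card : ℤ) : ZMod d) * m e else 0) := by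
            intro S
            split <;> simp [zsmul_eq_mul]
          rw [Finset.sum_congr rfl fun S _ => this S, ← Finset.sum_filter, ← Finset.sum_mul]
          congr 1
          rw [show (∑ S ∈ A.powerset.filter (fun S => e.erase k ⊆ S),
              (((-1 : ℤ) ^ S.card : ℤ) : ZMod d))
            = (((∑ S ∈ A.powerset.filter (fun S => e.erase k ⊆ S), (-1 : ℤ) ^ S.card) : ℤ)
                : ZMod d) by push_cast; rfl]
          rw [alt_sum_subset A (e.erase k)]
      _ = (((-1 : ℤ) ^ A.card : ℤ) : ZMod d) * m e₀ := by
          have hmem : e₀ ∈ Finset.univ.filter (fun e : Finset (Fin N) => k ∈ e) := by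
            simp only [Finset.mem_filter]
            exact ⟨Finset.mem_univ _, hk⟩
          have h0 : ∀ e ∈ Finset.univ.filter (fun e : Finset (Fin N) => k ∈ e), e ≠ e₀ →
              ((if e.erase k = A then ((-1 : ℤ) ^ A.card) else 0 : ℤ) : ZMod d) * m e = 0 := by
            intro e he hne
            have hke : k ∈ e := by
              simp only [Finset.mem_filter] at he
              exact he.2
            have hne' : e.erase k ≠ A := by
              intro h
              apply hne
              rw [← Finset.insert_erase hke, h, hAdef, Finset.insert_erase hk]
            simp [hne']
          rw [Finset.sum_eq_single_of_mem e₀ hmem h0]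
          have : e₀.erase k = A := hAdef.symm
          simp [this]
  -- put it together
  have hsplit : ∑ S ∈ A.powerset, ((-1 : ℤ) ^ S.card) • ((L S + T S : ℕ) : ZMod d)
      = (∑ S ∈ A.powerset, ((-1 : ℤ) ^ S.card) • ((L S : ℕ) : ZMod d))
        + ∑ S ∈ A.powerset, ((-1 : ℤ) ^ S.card) • ((T S : ℕ) : ZMod d) := by
    rw [← Finset.sum_add_distrib]
    refine Finset.sum_congr rfl fun S _ => ?_
    rw [← smul_add]
    congr 1
    push_cast
    ring
  rw [hconst, hLpart, zero_add] at hsplit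
  rw [hTpart] at hsplit
  -- (-1)^|A| is a unit in ZMod d
  have hunit : (((-1 : ℤ) ^ A.card : ℤ) : ZMod d) * (((-1 : ℤ) ^ A.card : ℤ) : ZMod d) = 1 := by
    push_cast
    rw [← mul_pow]
    norm_num
  apply hm
  calc m e₀ = ((((-1 : ℤ) ^ A.card : ℤ) : ZMod d) * (((-1 : ℤ) ^ A.card : ℤ) : ZMod d)) * m e₀ := by
        rw [hunit, one_mul]
    _ = (((-1 : ℤ) ^ A.card : ℤ) : ZMod d) * ((((-1 : ℤ) ^ A.card : ℤ) : ZMod d) * m e₀) := by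
        ring
    _ = 0 := by rw [← hsplit]; simp

end
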